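/- The function f₁(γ) = (γ+1)·ln(γ+1)/√(γ²+2γ) is injective on (0,∞). -/

import Mathlib

open Real

theorem stmt_6 :
    Set.InjOn (fun γ : ℝ => (γ + 1) * Real.log (γ + 1) / Real.sqrt (γ ^ 2 + 2 * γ))
      (Set.Ioi 0) := by
  have hmono : StrictMonoOn
      (fun γ : ℝ => (γ + 1) * Real.log (γ + 1) / Real.sqrt (γ ^ 2 + 2 * γ))
      (Set.Ioi 0) := by
    apply strictMonoOn_of_deriv_pos (convex_Ioi 0)
    · apply ContinuousOn.div
      · exact ((continuousOn_id.add continuousOn_const).mul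
          ((continuousOn_id.add continuousOn_const).log
            (fun x hx => by have : (0:ℝ) < x := hx; show x + 1 ≠ 0; positivity)))
      · exact (Continuous.sqrt (by continuity)).continuousOn
      · intro x hx
        have hx0 : (0:ℝ) < x := hx
        have hs : 0 < x ^ 2 + 2 * x := by positivity
        positivity
    · intro x hx
      rw [interior_Ioi] at hx
      have hx0 : (0:ℝ) < x := hx
      have hs : 0 < x ^ 2 + 2 * x := by positivity
      have hsq : Real.sqrt (x ^ 2 + 2 * x) ≠ 0 := by positivity
      have hsqpos : 0 < Real.sqrt (x ^ 2 + 2 * x) := Real.sqrt_pos.mpr hs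
      have hx1 : (0:ℝ) < x + 1 := by linarith
      have hg : HasDerivAt (fun y : ℝ => (y + 1) * Real.log (y + 1))
          (Real.log (x + 1) + 1) x := by
        have h1 : HasDerivAt (fun y : ℝ => y + 1) 1 x := (hasDerivAt_id x).add_const 1
        have h2 : HasDerivAt (fun y : ℝ => Real.log (y + 1)) ((x + 1)⁻¹ * 1) x :=
          by have := (Real.hasDerivAt_log (ne_of_gt hx1)).comp x h1; exact this
        have := h1.mul h2
        exact this.congr_deriv (by rw [mul_one, mul_inv_cancel₀ (ne_of_gt hx1)]; ring)
      have hh : HasDerivAt (fun y : ℝ => Real.sqrt (y ^ 2 + 2 * y))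
          ((x + 1) / Real.sqrt (x ^ 2 + 2 * x)) x := by
        have h1 : HasDerivAt (fun y : ℝ => y ^ 2 + 2 * y) (2 * x + 2) x := by
          have := (hasDerivAt_pow 2 x).add ((hasDerivAt_id x).const_mul 2)
          exact this.congr_deriv (by norm_num)
        have := (Real.hasDerivAt_sqrt (ne_of_gt hs)).comp x h1
        exact this.congr_deriv (by rw [one_div, inv_mul_eq_div, div_eq_div_iff (by positivity) hsq]; ring)
      have hf := hg.div hh hsq
      rw [show (fun γ : ℝ => (γ + 1) * Real.log (γ + 1) / Real.sqrt (γ ^ 2 + 2 * γ)) = ((fun y : ℝ => (y + 1) * Real.log (y + 1)) / fun y => Real.sqrt (y ^ 2 + 2 * y)) from rfl, hf.deriv]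
      have hsqsq : Real.sqrt (x ^ 2 + 2 * x) ^ 2 = x ^ 2 + 2 * x := Real.sq_sqrt hs.le
      have hlog : Real.log (x + 1) ≤ x := by
        have := Real.log_le_sub_one_of_pos hx1
        linarith
      have key : (Real.log (x + 1) + 1) * Real.sqrt (x ^ 2 + 2 * x) -
          (x + 1) * Real.log (x + 1) * ((x + 1) / Real.sqrt (x ^ 2 + 2 * x)) =
          (x ^ 2 + 2 * x - Real.log (x + 1)) / Real.sqrt (x ^ 2 + 2 * x) := by
        rw [eq_div_iff hsq]
        field_simp
        rw [Real.sq_sqrt (by positivity : (0:ℝ) ≤ x * (x + 2))]; ring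
      rw [key]
      apply div_pos
      · apply div_pos
        · nlinarith
        · exact hsqpos
      · nlinarith [hsqsq]
  exact hmono.injOn
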